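/- If H is a strict almost-direct product of finite groups G1, G2, G3 (i.e., H ≤ G1 × G2 × G3 satisfies: for every pair of coordinates from two of the groups there is a unique element in the third group making the triple belong to H, and H ≠ G1 × G2 × G3), then H is a commutative group. -/
import Mathlib


/-- A strict almost-direct product `H ≤ G1 × G2 × G3` of finite groups
(`H ≠ ⊤`, and for each pair of coordinates the completing element in the
remaining coordinate exists and is unique) is a commutative group. -/
theorem strict_almost_direct_product_comm
    {G1 G2 G3 : Type*} [Group G1] [Group G2] [Group G3]
    [Finite G1] [Finite G2] [Finite G3]
    (H : Subgroup (G1 × G2 × G3))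
    (hne : H ≠ ⊤)
    (h1 : ∀ (b : G2) (c : G3), ∃! a : G1, ((a, b, c) : G1 × G2 × G3) ∈ H)
    (h2 : ∀ (a : G1) (c : G3), ∃! b : G2, ((a, b, c) : G1 × G2 × G3) ∈ H)
    (h3 : ∀ (a : G1) (b : G2), ∃! c : G3, ((a, b, c) : G1 × G2 × G3) ∈ H) :
    ∀ x y : G1 × G2 × G3, x ∈ H → y ∈ H → x * y = y * x := by
  -- G3 is abelian
  have key3 : ∀ c c' : G3, c * c' = c' * c := by
    intro c c'
    obtain ⟨a, ha, -⟩ := h1 1 c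
    obtain ⟨b, hb, -⟩ := h2 1 c'
    have hmul1 : ((a, b, c * c') : G1 × G2 × G3) ∈ H := by
      have := H.mul_mem ha hb
      simpa using this
    have hmul2 : ((a, b, c' * c) : G1 × G2 × G3) ∈ H := by
      have := H.mul_mem hb ha
      simpa using this
    obtain ⟨cc, -, huniq⟩ := h3 a b
    exact (huniq _ hmul1).trans (huniq _ hmul2).symm
  -- G1 is abelian
  have key1 : ∀ a a' : G1, a * a' = a' * a := by
    intro a a'
    obtain ⟨c, hc, -⟩ := h3 a 1
    obtain ⟨c', hc', -⟩ := h3 a' 1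
    have hmul1 : ((a * a', 1, c * c') : G1 × G2 × G3) ∈ H := by
      have := H.mul_mem hc hc'
      simpa using this
    have hmul2 : ((a' * a, 1, c * c') : G1 × G2 × G3) ∈ H := by
      have := H.mul_mem hc' hc
      simpa [key3 c' c] using this
    obtain ⟨aa, -, huniq⟩ := h1 1 (c * c')
    exact (huniq _ hmul1).trans (huniq _ hmul2).symm
  -- G2 is abelian
  have key2 : ∀ b b' : G2, b * b' = b' * b := by
    intro b b'
    obtain ⟨c, hc, -⟩ := h3 1 b
    obtain ⟨c', hc', -⟩ := h3 1 b'
    have hmul1 : ((1, b * b', c * c') : G1 × G2 × G3) ∈ H := by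
      have := H.mul_mem hc hc'
      simpa using this
    have hmul2 : ((1, b' * b, c * c') : G1 × G2 × G3) ∈ H := by
      have := H.mul_mem hc' hc
      simpa [key3 c' c] using this
    obtain ⟨bb, -, huniq⟩ := h2 1 (c * c')
    exact (huniq _ hmul1).trans (huniq _ hmul2).symm
  intro x y _ _
  obtain ⟨a, b, c⟩ := x
  obtain ⟨a', b', c'⟩ := y
  simp [Prod.ext_iff, key1 a a', key2 b b', key3 c c']
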